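/- LION-Diagonal full linear attention theorem (Theorem A.3): for k = 1,…,L let a_k ∈ ℝ^d have all entries nonzero and Λ_k = diag(a_k); set m_i = a_1 ⊙ ⋯ ⊙ a_i (forward cumulative products, m_0 = all-ones) and r_i = a_{i+1} ⊙ ⋯ ⊙ a_L (reversed cumulative products, r_L = all-ones). Then the bidirectional outputs y^F_i + y^B_i of the diagonal-decay recurrences satisfy, for every i, y^F_i + y^B_i = Σ_{j=1}^{i} ⟨q_i ⊙ m_i, k_j ⊙ m_j^{∘−1}⟩ v_j + Σ_{j=i+1}^{L} ⟨q_i ⊙ r_i, k_j ⊙ r_j^{∘−1}⟩ v_j; equivalently, the stacked outputs equal (Tril[(Q ⊙ 𝐋^F)(K ⊙ Inv(𝐋^F))^⊤] + Triu₊[(Q ⊙ 𝐋^B)(K ⊙ Inv(𝐋^B))^⊤]) V, where 𝐋^F, 𝐋^B ∈ ℝ^{L×d} have i-th rows m_i and r_i, Inv is the entrywise inverse, Tril keeps the lower-triangular part including the diagonal, and Triu₊ keeps the strictly upper-triangular part, so the diagonal is counted exactly once. -/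

import Mathlib

open Matrix Finset

/-- Forward cumulative entrywise product `m_i = a_1 ⊙ a_2 ⊙ ⋯ ⊙ a_i`
(with `m_0` the all-ones vector). -/
noncomputable def mcum {d : ℕ} (a : ℕ → Fin d → ℝ) (i : ℕ) : Fin d → ℝ :=
  fun x => ∏ t ∈ Finset.Icc 1 i, a t x

/-- Reversed cumulative entrywise product `r_i = a_{i+1} ⊙ ⋯ ⊙ a_L`
(with `r_L` the all-ones vector). -/
noncomputable def rcum {d : ℕ} (a : ℕ → Fin d → ℝ) (L i : ℕ) : Fin d → ℝ :=
  fun x => ∏ t ∈ Finset.Icc (i + 1) L, a t x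

lemma vecMul_diag_vv {d : ℕ} (q w k v : Fin d → ℝ) :
    q ᵥ* (Matrix.diagonal w * vecMulVec k v) = ((q * w) ⬝ᵥ k) • v := by
  ext x
  simp only [Matrix.vecMul, dotProduct, Matrix.diagonal_mul, Matrix.vecMulVec_apply,
    Pi.smul_apply, Pi.mul_apply, smul_eq_mul, Finset.sum_mul]
  exact Finset.sum_congr rfl fun y _ => by ring

lemma vecMul_sum' {d : ℕ} {ι : Type*} (q : Fin d → ℝ) (s : Finset ι)
    (f : ι → Matrix (Fin d) (Fin d) ℝ) :
    q ᵥ* (∑ j ∈ s, f j) = ∑ j ∈ s, q ᵥ* f j := by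
  classical
  induction s using Finset.induction with
  | empty => simp [Matrix.vecMul_zero]
  | insert _ _ h ih => simp [Finset.sum_insert h, Matrix.vecMul_add, ih]

/-- LION-Diagonal full linear attention theorem: with nonzero diagonal decays,
the corrected bidirectional outputs satisfy
`y^F_i + y^B_i = Σ_{j≤i} ⟨q_i ⊙ m_i, k_j ⊙ m_j^{∘-1}⟩ v_j
+ Σ_{j>i} ⟨q_i ⊙ r_i, k_j ⊙ r_j^{∘-1}⟩ v_j`, i.e. the stacked outputs equal
`(Tril[(Q ⊙ 𝐋^F)(K ⊙ Inv(𝐋^F))^⊤] + Triu₊[(Q ⊙ 𝐋^B)(K ⊙ Inv(𝐋^B))^⊤]) V`,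
the diagonal being counted exactly once. -/
theorem lion_diagonal_full_linear_attention
    (L d : ℕ) (hL : 0 < L) (hd : 0 < d)
    (q k v : ℕ → (Fin d → ℝ)) (a : ℕ → (Fin d → ℝ))
    (ha : ∀ t x, 1 ≤ t → t ≤ L → a t x ≠ 0)
    (SF SB : ℕ → Matrix (Fin d) (Fin d) ℝ)
    (hSF0 : SF 0 = 0)
    (hSF : ∀ i, 1 ≤ i → i ≤ L →
      SF i = Matrix.diagonal (a i) * SF (i - 1) + vecMulVec (k i) (v i))
    (hSBL : SB L = vecMulVec (k L) (v L))
    (hSB : ∀ i, 1 ≤ i → i < L →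
      SB i = Matrix.diagonal (a (i + 1)) * SB (i + 1) + vecMulVec (k i) (v i))
    (yF yB : ℕ → (Fin d → ℝ))
    (hyF : ∀ i, yF i = q i ᵥ* SF i - ((1 / 2) * (q i ⬝ᵥ k i)) • v i)
    (hyB : ∀ i, yB i = q i ᵥ* SB i - ((1 / 2) * (q i ⬝ᵥ k i)) • v i) :
    ∀ i, 1 ≤ i → i ≤ L →
      yF i + yB i =
        (∑ j ∈ Finset.Icc 1 i, ((q i * mcum a i) ⬝ᵥ (k j * (mcum a j)⁻¹)) • v j)
        + ∑ j ∈ Finset.Icc (i + 1) L,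
            ((q i * rcum a L i) ⬝ᵥ (k j * (rcum a L j)⁻¹)) • v j := by
  -- nonvanishing of cumulative products
  have hm : ∀ i, i ≤ L → ∀ x, mcum a i x ≠ 0 := by
    intro i hi x
    refine Finset.prod_ne_zero_iff.2 fun t ht => ?_
    simp only [Finset.mem_Icc] at ht
    exact ha t x ht.1 (ht.2.trans hi)
  have hr : ∀ i, ∀ x, rcum a L i x ≠ 0 := by
    intro i x
    refine Finset.prod_ne_zero_iff.2 fun t ht => ?_
    simp only [Finset.mem_Icc] at ht
    exact ha t x (le_trans (Nat.le_add_left 1 i) ht.1) ht.2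
  -- closed form for SF
  have hSFc : ∀ i, i ≤ L →
      SF i = ∑ j ∈ Finset.Icc 1 i,
        Matrix.diagonal (fun x => mcum a i x * (mcum a j x)⁻¹) * vecMulVec (k j) (v j) := by
    intro i
    induction i with
    | zero => intro _; simp [hSF0]
    | succ n ih =>
      intro hn
      have hn' : n ≤ L := Nat.le_of_succ_le hn
      have hstep : ∀ x, mcum a (n + 1) x = a (n + 1) x * mcum a n x := by
        intro x
        rw [mcum, mcum, Finset.prod_Icc_succ_top (Nat.succ_le_succ (Nat.zero_le n))]
        ring
      rw [hSF (n + 1) (Nat.succ_le_succ (Nat.zero_le n)) hn, Nat.add_sub_cancel, ih hn',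
        Finset.mul_sum]
      rw [show Finset.Icc 1 (n + 1) = insert (n + 1) (Finset.Icc 1 n) by
        ext t; simp [Finset.mem_Icc]; omega]
      rw [Finset.sum_insert (by simp), add_comm]
      congr 1
      · have : (fun x => mcum a (n+1) x * (mcum a (n+1) x)⁻¹) = fun _ => (1:ℝ) := by
          funext x; exact mul_inv_cancel₀ (hm (n+1) hn x)
        rw [this]
        simp [Matrix.diagonal_one]
      · refine Finset.sum_congr rfl fun j hj => ?_
        rw [← Matrix.mul_assoc, Matrix.diagonal_mul_diagonal]
        exact congrArg (fun w => Matrix.diagonal w * vecMulVec (k j) (v j))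
          (funext fun x => by rw [hstep x]; ring)
  -- closed form for SB
  have hSBc : ∀ n i, i + n = L → 1 ≤ i →
      SB i = ∑ j ∈ Finset.Icc i L,
        Matrix.diagonal (fun x => rcum a L i x * (rcum a L j x)⁻¹) * vecMulVec (k j) (v j) := by
    intro n
    induction n with
    | zero =>
      intro i hi _
      have hiL : i = L := by omega
      rw [hiL, hSBL, Finset.Icc_self, Finset.sum_singleton]
      have : (fun x => rcum a L L x * (rcum a L L x)⁻¹) = fun _ => (1:ℝ) := by
        funext x; exact mul_inv_cancel₀ (hr L x)
      rw [this]
      simp [Matrix.diagonal_one]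
    | succ n ih =>
      intro i hi h1
      have hiL : i < L := by omega
      have hrec : ∀ x, rcum a L i x = a (i + 1) x * rcum a L (i + 1) x := by
        intro x
        rw [rcum, rcum, show Finset.Icc (i + 1) L = insert (i + 1) (Finset.Icc (i + 2) L) by
          ext t; simp [Finset.mem_Icc]; omega, Finset.prod_insert (by simp)]
      rw [hSB i h1 hiL, ih (i + 1) (by omega) (by omega), Finset.mul_sum]
      rw [show Finset.Icc i L = insert i (Finset.Icc (i + 1) L) by
        ext t; simp [Finset.mem_Icc]; omega]
      rw [Finset.sum_insert (by simp), add_comm]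
      congr 1
      · have : (fun x => rcum a L i x * (rcum a L i x)⁻¹) = fun _ => (1:ℝ) := by
          funext x; exact mul_inv_cancel₀ (hr i x)
        rw [this]
        simp [Matrix.diagonal_one]
      · refine Finset.sum_congr rfl fun j hj => ?_
        rw [← Matrix.mul_assoc, Matrix.diagonal_mul_diagonal]
        exact congrArg (fun w => Matrix.diagonal w * vecMulVec (k j) (v j))
          (funext fun x => by rw [hrec x]; ring)
  -- main computation
  intro i h1 hiL
  have hqF : q i ᵥ* SF i =
      ∑ j ∈ Finset.Icc 1 i, ((q i * mcum a i) ⬝ᵥ (k j * (mcum a j)⁻¹)) • v j := by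
    rw [hSFc i hiL, vecMul_sum']
    refine Finset.sum_congr rfl fun j hj => ?_
    rw [show Matrix.diagonal (fun x => mcum a i x * (mcum a j x)⁻¹) =
        Matrix.diagonal (mcum a i * (mcum a j)⁻¹) by rfl, vecMul_diag_vv]
    congr 1
    simp only [dotProduct, Pi.mul_apply, Pi.inv_apply]
    exact Finset.sum_congr rfl fun x _ => by ring
  have hqB : q i ᵥ* SB i =
      ((q i ⬝ᵥ k i) • v i) +
      ∑ j ∈ Finset.Icc (i + 1) L, ((q i * rcum a L i) ⬝ᵥ (k j * (rcum a L j)⁻¹)) • v j := by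
    rw [hSBc (L - i) i (by omega) h1]
    rw [show Finset.Icc i L = insert i (Finset.Icc (i + 1) L) by
      ext t; simp [Finset.mem_Icc]; omega]
    rw [Finset.sum_insert (by simp), Matrix.vecMul_add, vecMul_sum']
    congr 1
    · rw [show Matrix.diagonal (fun x => rcum a L i x * (rcum a L i x)⁻¹) =
          Matrix.diagonal (rcum a L i * (rcum a L i)⁻¹) by rfl, vecMul_diag_vv]
      congr 1
      simp only [dotProduct, Pi.mul_apply, Pi.inv_apply]
      refine Finset.sum_congr rfl fun x _ => ?_
      field_simp [hr i x]
    · refine Finset.sum_congr rfl fun j hj => ?_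
      rw [show Matrix.diagonal (fun x => rcum a L i x * (rcum a L j x)⁻¹) =
          Matrix.diagonal (rcum a L i * (rcum a L j)⁻¹) by rfl, vecMul_diag_vv]
      congr 1
      simp only [dotProduct, Pi.mul_apply, Pi.inv_apply]
      exact Finset.sum_congr rfl fun x _ => by ring
  rw [hyF, hyB, hqF, hqB]
  ext x
  simp only [Pi.add_apply, Pi.sub_apply, Pi.smul_apply, smul_eq_mul]
  ring
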